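/- Let l^{αβ} be the Lorentz generators (l^{αβ})^μ_ν = η^{αμ}δ^β_ν − η^{βμ}δ^α_ν on ℝ⁴, l_{αβ} = η_{αγ}η_{βδ} l^{γδ}, and let P_S, P_A, P_η be the operators on ℝ⁴ ⊗ ℝ⁴ given by (P_S)^{μν}_{ρσ} = (1/2)(δ^μ_ρ δ^ν_σ + δ^ν_ρ δ^μ_σ), (P_A)^{μν}_{ρσ} = (1/2)(δ^μ_ρ δ^ν_σ − δ^ν_ρ δ^μ_σ), (P_η)^{μν}_{ρσ} = (1/4) η^{μν} η_{ρσ}. Suppose a ∈ ℝ⁴ ⊗ ℝ⁴ satisfies P_η a = 0, and B^{αβ} ∈ ℝ⁴ ⊗ ℝ⁴ is a family of tensors (α, β ∈ {0,1,2,3}) such that B^{αβ} = (l^{αβ} ⊗ 1 + 1 ⊗ l^{αβ}) a for all α, β. Then a = −(1/16)(P_S + 2P_A) Σ_{α,β=0}^{3} (l_{αβ} ⊗ 1 + 1 ⊗ l_{αβ}) B^{αβ}. -/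
import Mathlib


open Kronecker

noncomputable section

/-- The Minkowski metric `η = diag(1,-1,-1,-1)` on `ℝ⁴`. -/
def eta : Fin 4 → Fin 4 → ℝ := fun μ ν => if μ = ν then (if μ = 0 then 1 else -1) else 0

/-- The Lorentz generators of the vector representation,
`(l^{αβ})^μ_ν = η^{αμ} δ^β_ν − η^{βμ} δ^α_ν`, as real 4×4 matrices. -/
def lgen (α β : Fin 4) : Matrix (Fin 4) (Fin 4) ℝ :=
  Matrix.of fun μ ν => eta α μ * (if β = ν then 1 else 0) - eta β μ * (if α = ν then 1 else 0)

/-- The generators with lowered indices, `l_{αβ} = η_{αγ} η_{βδ} l^{γδ}`. -/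
def lgenLow (α β : Fin 4) : Matrix (Fin 4) (Fin 4) ℝ :=
  ∑ γ : Fin 4, ∑ δ : Fin 4, (eta α γ * eta β δ) • lgen γ δ

/-- Symmetrizer `(P_S)^{μν}_{ρσ} = (1/2)(δ^μ_ρ δ^ν_σ + δ^ν_ρ δ^μ_σ)`. -/
def PS : Matrix (Fin 4 × Fin 4) (Fin 4 × Fin 4) ℝ :=
  Matrix.of fun p q =>
    (1 / 2 : ℝ) * ((if p.1 = q.1 ∧ p.2 = q.2 then 1 else 0) +
      (if p.1 = q.2 ∧ p.2 = q.1 then 1 else 0))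

/-- Antisymmetrizer `(P_A)^{μν}_{ρσ} = (1/2)(δ^μ_ρ δ^ν_σ − δ^ν_ρ δ^μ_σ)`. -/
def PA : Matrix (Fin 4 × Fin 4) (Fin 4 × Fin 4) ℝ :=
  Matrix.of fun p q =>
    (1 / 2 : ℝ) * ((if p.1 = q.1 ∧ p.2 = q.2 then 1 else 0) -
      (if p.1 = q.2 ∧ p.2 = q.1 then 1 else 0))

/-- Trace projector `(P_η)^{μν}_{ρσ} = (1/4) η^{μν} η_{ρσ}`. -/
def Peta : Matrix (Fin 4 × Fin 4) (Fin 4 × Fin 4) ℝ :=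
  Matrix.of fun p q => (1 / 4 : ℝ) * eta p.1 p.2 * eta q.1 q.2


lemma my_sum_mulVec {ι : Type*} (s : Finset ι) (f : ι → Matrix (Fin 4 × Fin 4) (Fin 4 × Fin 4) ℝ)
    (v : Fin 4 × Fin 4 → ℝ) :
    ∑ i ∈ s, (f i).mulVec v = (∑ i ∈ s, f i).mulVec v := by
  ext j
  simp only [Finset.sum_apply, Matrix.mulVec, dotProduct, Matrix.sum_apply,
    Finset.sum_mul]
  exact Finset.sum_comm


-- Auxiliary machinery ------------------------------------------------------

lemma lgen_apply (α β μ ν : Fin 4) :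
    lgen α β μ ν = eta α μ * (if β = ν then 1 else 0) - eta β μ * (if α = ν then 1 else 0) := rfl

set_option maxHeartbeats 1600000 in
lemma hlow_apply (α β μ ν : Fin 4) :
    lgenLow α β μ ν = eta α α * eta β β * lgen α β μ ν := by
  unfold lgenLow
  fin_cases α <;> fin_cases β <;>
    simp [Matrix.sum_apply, Matrix.smul_apply, Fin.sum_univ_four, eta]

lemma mul_apply4 (A B : Matrix (Fin 4) (Fin 4) ℝ) (μ ν : Fin 4) :
    (A * B) μ ν = ∑ k : Fin 4, A μ k * B k ν := Matrix.mul_apply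

set_option maxHeartbeats 1600000 in
lemma sumC (μ ρ : Fin 4) :
    ∑ α : Fin 4, ∑ β : Fin 4, (lgenLow α β * lgen α β) μ ρ =
      -6 * (if μ = ρ then 1 else 0) := by
  fin_cases μ <;> fin_cases ρ <;>
    · simp only [mul_apply4, Fin.sum_univ_four, hlow_apply, lgen_apply]
      simp [eta]
      try norm_num

set_option maxHeartbeats 1600000 in
lemma sumT (μ ν ρ σ : Fin 4) :
    ∑ α : Fin 4, ∑ β : Fin 4, lgenLow α β μ ρ * lgen α β ν σ =
      2 * (eta μ ν * eta ρ σ - (if μ = σ ∧ ν = ρ then 1 else 0)) := by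
  fin_cases μ <;> fin_cases ν <;> fin_cases ρ <;> fin_cases σ <;>
    · simp only [Fin.sum_univ_four, hlow_apply, lgen_apply]
      simp [eta]
      try norm_num

lemma pick (c : Fin 4 × Fin 4) (f : Fin 4 × Fin 4 → ℝ) :
    ∑ k : Fin 4 × Fin 4, (if c = k then (1 : ℝ) else 0) * f k = f c := by
  simp [ite_mul, Finset.sum_ite_eq]

lemma hprod (α β : Fin 4) :
    (lgenLow α β ⊗ₖ (1 : Matrix (Fin 4) (Fin 4) ℝ) +
        (1 : Matrix (Fin 4) (Fin 4) ℝ) ⊗ₖ lgenLow α β) *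
      (lgen α β ⊗ₖ (1 : Matrix (Fin 4) (Fin 4) ℝ) +
        (1 : Matrix (Fin 4) (Fin 4) ℝ) ⊗ₖ lgen α β) =
    (lgenLow α β * lgen α β) ⊗ₖ (1 : Matrix (Fin 4) (Fin 4) ℝ) +
      lgenLow α β ⊗ₖ lgen α β + lgen α β ⊗ₖ lgenLow α β +
      (1 : Matrix (Fin 4) (Fin 4) ℝ) ⊗ₖ (lgenLow α β * lgen α β) := by
  rw [add_mul, mul_add, mul_add, ← Matrix.mul_kronecker_mul, ← Matrix.mul_kronecker_mul,
    ← Matrix.mul_kronecker_mul, ← Matrix.mul_kronecker_mul]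
  simp only [one_mul, mul_one]
  abel

set_option maxHeartbeats 1600000 in
lemma hS_apply (p q : Fin 4 × Fin 4) :
    (∑ α : Fin 4, ∑ β : Fin 4,
      ((lgenLow α β ⊗ₖ (1 : Matrix (Fin 4) (Fin 4) ℝ) +
        (1 : Matrix (Fin 4) (Fin 4) ℝ) ⊗ₖ lgenLow α β) *
       (lgen α β ⊗ₖ (1 : Matrix (Fin 4) (Fin 4) ℝ) +
        (1 : Matrix (Fin 4) (Fin 4) ℝ) ⊗ₖ lgen α β))) p q =
    -12 * (if p = q then 1 else 0) + 4 * (eta p.1 p.2 * eta q.1 q.2) -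
      4 * (if (p.2, p.1) = q then 1 else 0) := by
  obtain ⟨μ, ν⟩ := p
  obtain ⟨ρ, σ⟩ := q
  simp only [hprod, Matrix.sum_apply, Matrix.add_apply, Matrix.kroneckerMap_apply,
    Matrix.one_apply]
  have swapT : ∀ α β : Fin 4, lgen α β μ ρ * lgenLow α β ν σ
      = lgenLow α β μ ρ * lgen α β ν σ := by
    intro α β
    simp only [hlow_apply]
    ring
  simp only [swapT, Finset.sum_add_distrib, ← Finset.sum_mul, ← Finset.mul_sum]
  rw [sumC, sumT, sumC]
  simp only [Prod.mk.injEq]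
  fin_cases μ <;> fin_cases ν <;> fin_cases ρ <;> fin_cases σ <;>
    (simp [eta]; try norm_num)

lemma hP (p k : Fin 4 × Fin 4) :
    (PS + (2 : ℝ) • PA) p k =
      (3 / 2 : ℝ) * (if p = k then 1 else 0) -
        (1 / 2 : ℝ) * (if (p.2, p.1) = k then 1 else 0) := by
  obtain ⟨μ, ν⟩ := p
  obtain ⟨i, j⟩ := k
  simp only [Matrix.add_apply, Matrix.smul_apply, smul_eq_mul, PS, PA, Matrix.of_apply,
    Prod.mk.injEq, and_comm]
  ring

set_option maxHeartbeats 1600000 in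
/-- Solving the cocycle equation for a rank-2 tensor: if `a` is traceless (`P_η a = 0`) and
`B^{αβ} = (l^{αβ} ⊗ 1 + 1 ⊗ l^{αβ}) a`, then
`a = −(1/16)(P_S + 2 P_A) Σ_{αβ} (l_{αβ} ⊗ 1 + 1 ⊗ l_{αβ}) B^{αβ}`. -/
theorem rank_two_cocycle_solution (a : Fin 4 × Fin 4 → ℝ)
    (ha : Peta.mulVec a = 0)
    (B : Fin 4 → Fin 4 → (Fin 4 × Fin 4 → ℝ))
    (hB : ∀ α β : Fin 4,
      B α β = (lgen α β ⊗ₖ (1 : Matrix (Fin 4) (Fin 4) ℝ) +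
        (1 : Matrix (Fin 4) (Fin 4) ℝ) ⊗ₖ lgen α β).mulVec a) :
    a = (-(1 / 16) : ℝ) • (PS + (2 : ℝ) • PA).mulVec
        (∑ α : Fin 4, ∑ β : Fin 4,
          (lgenLow α β ⊗ₖ (1 : Matrix (Fin 4) (Fin 4) ℝ) +
            (1 : Matrix (Fin 4) (Fin 4) ℝ) ⊗ₖ lgenLow α β).mulVec (B α β)) := by
  have h2 : (∑ α : Fin 4, ∑ β : Fin 4,
      (lgenLow α β ⊗ₖ (1 : Matrix (Fin 4) (Fin 4) ℝ) +
        (1 : Matrix (Fin 4) (Fin 4) ℝ) ⊗ₖ lgenLow α β).mulVec (B α β)) =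
      (∑ α : Fin 4, ∑ β : Fin 4,
      ((lgenLow α β ⊗ₖ (1 : Matrix (Fin 4) (Fin 4) ℝ) +
        (1 : Matrix (Fin 4) (Fin 4) ℝ) ⊗ₖ lgenLow α β) *
       (lgen α β ⊗ₖ (1 : Matrix (Fin 4) (Fin 4) ℝ) +
        (1 : Matrix (Fin 4) (Fin 4) ℝ) ⊗ₖ lgen α β))).mulVec a := by
    rw [← my_sum_mulVec]
    refine Finset.sum_congr rfl fun α _ => ?_
    rw [← my_sum_mulVec]
    refine Finset.sum_congr rfl fun β _ => ?_
    rw [hB α β, Matrix.mulVec_mulVec]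
  rw [h2]
  have hEA : ∑ q : Fin 4 × Fin 4, eta q.1 q.2 * a q = 0 := by
    have h0 := congrFun ha ((0 : Fin 4), (0 : Fin 4))
    simp only [Matrix.mulVec, dotProduct, Peta, Matrix.of_apply, Pi.zero_apply] at h0
    have he : eta (0 : Fin 4) (0 : Fin 4) = 1 := by norm_num [eta]
    have hrw : ∑ q : Fin 4 × Fin 4,
        1 / 4 * eta ((0 : Fin 4), (0 : Fin 4)).1 ((0 : Fin 4), (0 : Fin 4)).2 *
          eta q.1 q.2 * a q
        = 1 / 4 * ∑ q : Fin 4 × Fin 4, eta q.1 q.2 * a q := by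
      rw [Finset.mul_sum]
      refine Finset.sum_congr rfl fun q _ => ?_
      simp only [he]
      ring
    rw [hrw] at h0
    linarith
  set S : Matrix (Fin 4 × Fin 4) (Fin 4 × Fin 4) ℝ :=
      (∑ α : Fin 4, ∑ β : Fin 4,
      ((lgenLow α β ⊗ₖ (1 : Matrix (Fin 4) (Fin 4) ℝ) +
        (1 : Matrix (Fin 4) (Fin 4) ℝ) ⊗ₖ lgenLow α β) *
       (lgen α β ⊗ₖ (1 : Matrix (Fin 4) (Fin 4) ℝ) +
        (1 : Matrix (Fin 4) (Fin 4) ℝ) ⊗ₖ lgen α β))) with hSdef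
  have hw : ∀ k : Fin 4 × Fin 4, S.mulVec a k = -12 * a k - 4 * a (k.2, k.1) := by
    intro k
    have t1 := pick k a
    have t2 := pick (k.2, k.1) a
    calc S.mulVec a k = ∑ q : Fin 4 × Fin 4, S k q * a q := rfl
      _ = ∑ q : Fin 4 × Fin 4,
          (-12 * ((if k = q then (1 : ℝ) else 0) * a q)
            + 4 * eta k.1 k.2 * (eta q.1 q.2 * a q)
            - 4 * ((if (k.2, k.1) = q then (1 : ℝ) else 0) * a q)) := by
        refine Finset.sum_congr rfl fun q _ => ?_
        rw [hSdef, hS_apply]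
        ring
      _ = -12 * ∑ q : Fin 4 × Fin 4, (if k = q then (1 : ℝ) else 0) * a q
          + 4 * eta k.1 k.2 * ∑ q : Fin 4 × Fin 4, eta q.1 q.2 * a q
          - 4 * ∑ q : Fin 4 × Fin 4, (if (k.2, k.1) = q then (1 : ℝ) else 0) * a q := by
        rw [Finset.sum_sub_distrib, Finset.sum_add_distrib, ← Finset.mul_sum,
          ← Finset.mul_sum, ← Finset.mul_sum]
      _ = -12 * a k - 4 * a (k.2, k.1) := by rw [t1, t2, hEA]; ring
  funext p
  have hfin : ∑ k : Fin 4 × Fin 4, (PS + (2 : ℝ) • PA) p k * S.mulVec a k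
      = -16 * a p := by
    have t1 := pick p (S.mulVec a)
    have t2 := pick (p.2, p.1) (S.mulVec a)
    calc ∑ k : Fin 4 × Fin 4, (PS + (2 : ℝ) • PA) p k * S.mulVec a k
        = ∑ k : Fin 4 × Fin 4,
            ((3 / 2 : ℝ) * ((if p = k then (1 : ℝ) else 0) * S.mulVec a k)
              - (1 / 2 : ℝ) * ((if (p.2, p.1) = k then (1 : ℝ) else 0) * S.mulVec a k)) := by
          refine Finset.sum_congr rfl fun k _ => ?_
          rw [hP]
          ring
      _ = (3 / 2 : ℝ) * S.mulVec a p - (1 / 2 : ℝ) * S.mulVec a (p.2, p.1) := by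
          rw [Finset.sum_sub_distrib, ← Finset.mul_sum, ← Finset.mul_sum, t1, t2]
      _ = -16 * a p := by
          rw [hw p, hw (p.2, p.1)]
          simp only [Prod.fst, Prod.snd, Prod.mk.eta]
          ring
  have : ((PS + (2 : ℝ) • PA).mulVec (S.mulVec a)) p
      = ∑ k : Fin 4 × Fin 4, (PS + (2 : ℝ) • PA) p k * S.mulVec a k := rfl
  simp only [Pi.smul_apply, this, hfin, smul_eq_mul]
  ring
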